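/- Let G be a finite simple graph, and r, k ≥ 1. If G admits a rank-r quantum k-colouring, then G admits an (r,k)-clump representation. In particular ξ_c^{(r)}(G) ≤ χ_q^{(r)}(G). -/

import Mathlib

open scoped ComplexConjugate

/-- The standard (conjugate-linear in the first argument) inner product on `ι → ℂ`. -/
noncomputable def cdot {ι : Type} [Fintype ι] (x y : ι → ℂ) : ℂ :=
  ∑ i, conj (x i) * y i

/-- A `k`-dimensional (complex) orthogonal representation of a graph. -/
def IsOrthRep {V : Type} (G : SimpleGraph V) (k : ℕ) (ψ : V → Fin k → ℂ) : Prop :=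
  (∀ v, cdot (ψ v) (ψ v) = 1) ∧ ∀ u v, G.Adj u v → cdot (ψ u) (ψ v) = 0

/-- The orthogonal rank `ξ(G)`: the least `k ≥ 1` admitting a `k`-dimensional
orthogonal representation. -/
noncomputable def orthRank {V : Type} (G : SimpleGraph V) : ℕ :=
  sInf {k | 1 ≤ k ∧ ∃ ψ : V → Fin k → ℂ, IsOrthRep G k ψ}

/-- A quantum `k`-colouring of `G` on `ℂ^d`: projective measurements
`{E v c}_{c ∈ Fin k}` such that `E u c * E v c = 0` for adjacent `u, v`. -/
def IsQuantumColoring {V : Type} (G : SimpleGraph V) (k d : ℕ)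
    (E : V → Fin k → Matrix (Fin d) (Fin d) ℂ) : Prop :=
  (∀ v c, (E v c).IsHermitian) ∧
  (∀ v c, E v c * E v c = E v c) ∧
  (∀ v, ∑ c, E v c = 1) ∧
  ∀ u v, G.Adj u v → ∀ c, E u c * E v c = 0

/-- The quantum chromatic number `χ_q(G)`: the least `k ≥ 1` for which a quantum
`k`-colouring exists on `ℂ^d` for some `d ≥ 1`. -/
noncomputable def quantumChromaticNumber {V : Type} (G : SimpleGraph V) : ℕ :=
  sInf {k | 1 ≤ k ∧ ∃ d, 1 ≤ d ∧
    ∃ E : V → Fin k → Matrix (Fin d) (Fin d) ℂ, IsQuantumColoring G k d E}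

/-- A rank-`r` quantum `k`-colouring: a quantum `k`-colouring on `ℂ^(r*k)` in which
every projector has rank exactly `r`. -/
def IsRankRQuantumColoring {V : Type} (G : SimpleGraph V) (r k : ℕ)
    (E : V → Fin k → Matrix (Fin (r * k)) (Fin (r * k)) ℂ) : Prop :=
  IsQuantumColoring G k (r * k) E ∧ ∀ v c, (E v c).rank = r

/-- The rank-`r` quantum chromatic number `χ_q^{(r)}(G)`. -/
noncomputable def rankChromaticNumber {V : Type} (G : SimpleGraph V) (r : ℕ) : ℕ :=
  sInf {k | 1 ≤ k ∧ ∃ E : V → Fin k → Matrix (Fin (r * k)) (Fin (r * k)) ℂ,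
    IsRankRQuantumColoring G r k E}

/-- The chromatic number of `G` as a natural number: the least `k ≥ 1` for which a
proper `k`-colouring exists. -/
noncomputable def chromNat {V : Type} (G : SimpleGraph V) : ℕ :=
  sInf {k | 1 ≤ k ∧ G.Colorable k}

/-- The clique number `ω(G)`. -/
noncomputable def cliqueNum' {V : Type} (G : SimpleGraph V) : ℕ :=
  sSup {n | ∃ S : Finset V, G.IsNClique n S}

/-- An `(r,k)`-vector clump: `r*k` pairwise orthogonal unit vectors in `ℂ^(r*k)`. -/
def IsClump (r k : ℕ) (ψ : Fin r → Fin k → Fin (r * k) → ℂ) : Prop :=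
  ∀ i j i' j', cdot (ψ i j) (ψ i' j') = if i = i' ∧ j = j' then (1 : ℂ) else 0

/-- Orthogonality of two `(r,k)`-clumps. -/
def ClumpOrthogonal (r k : ℕ) (ψ φ : Fin r → Fin k → Fin (r * k) → ℂ) : Prop :=
  ∀ i i', ∑ j, cdot (ψ i j) (φ i' j) = 0

/-- An `(r,k)`-clump representation of `G`. -/
def IsClumpRep {V : Type} (G : SimpleGraph V) (r k : ℕ)
    (ψ : V → Fin r → Fin k → Fin (r * k) → ℂ) : Prop :=
  (∀ v, IsClump r k (ψ v)) ∧ ∀ u v, G.Adj u v → ClumpOrthogonal r k (ψ u) (ψ v)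

/-- The rank-`r` clump rank `ξ_c^{(r)}(G)`. -/
noncomputable def clumpRank {V : Type} (G : SimpleGraph V) (r : ℕ) : ℕ :=
  sInf {k | 1 ≤ k ∧ ∃ ψ, IsClumpRep G r k ψ}


section AuxClump

open scoped InnerProductSpace

lemma toEuclideanLin_mul_apply' {n : ℕ} (A B : Matrix (Fin n) (Fin n) ℂ)
    (x : EuclideanSpace ℂ (Fin n)) :
    Matrix.toEuclideanLin (A * B) x = Matrix.toEuclideanLin A (Matrix.toEuclideanLin B x) := by
  simp [Matrix.toEuclideanLin_apply, Matrix.mulVec_mulVec]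

lemma cdot_eq_inner' {n : ℕ} (x y : EuclideanSpace ℂ (Fin n)) :
    cdot (WithLp.equiv 2 (Fin n → ℂ) x) (WithLp.equiv 2 (Fin n → ℂ) y) = ⟪x, y⟫_ℂ := by
  simp [cdot, PiLp.inner_apply, RCLike.inner_apply]
  exact Finset.sum_congr rfl fun _ _ => mul_comm _ _

lemma quantum_to_clump' {V : Type} (G : SimpleGraph V) (r k : ℕ)
    (E : V → Fin k → Matrix (Fin (r * k)) (Fin (r * k)) ℂ)
    (hE : IsRankRQuantumColoring G r k E) :
    ∃ ψ : V → Fin r → Fin k → Fin (r * k) → ℂ, IsClumpRep G r k ψ := by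
  classical
  obtain ⟨⟨hherm, hidem, hsum, hadj⟩, hrank⟩ := hE
  let T : V → Fin k → EuclideanSpace ℂ (Fin (r * k)) →ₗ[ℂ] EuclideanSpace ℂ (Fin (r * k)) :=
    fun v c => Matrix.toEuclideanLin (E v c)
  have hTsym : ∀ v c, (T v c).IsSymmetric := fun v c =>
    Matrix.isHermitian_iff_isSymmetric.mp (hherm v c)
  have hTidem : ∀ v c x, T v c (T v c x) = T v c x := by
    intro v c x
    show Matrix.toEuclideanLin (E v c) (Matrix.toEuclideanLin (E v c) x) = _
    rw [← toEuclideanLin_mul_apply', hidem]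
  have hTsum : ∀ v (x : EuclideanSpace ℂ (Fin (r * k))), ∑ c, T v c x = x := by
    intro v x
    have h1 : ∑ c, T v c = Matrix.toEuclideanLin (∑ c, E v c) := by
      simp [T, map_sum]
    calc ∑ c, T v c x = (∑ c, T v c) x := by rw [LinearMap.sum_apply]
    _ = Matrix.toEuclideanLin (∑ c, E v c) x := by rw [h1]
    _ = x := by rw [hsum v]; simp [Matrix.toEuclideanLin_apply]
  have hkill : ∀ v (c c' : Fin k), c ≠ c' → ∀ x, T v c x = x → T v c' x = 0 := by
    intro v c c' hne x hx
    have hterm : ∀ c'', ⟪x, T v c'' x⟫_ℂ = ((‖T v c'' x‖ : ℂ))^2 := by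
      intro c''
      calc ⟪x, T v c'' x⟫_ℂ = ⟪x, T v c'' (T v c'' x)⟫_ℂ := by rw [hTidem]
      _ = ⟪T v c'' x, T v c'' x⟫_ℂ := (hTsym v c'' x (T v c'' x)).symm
      _ = ((‖T v c'' x‖ : ℂ))^2 := inner_self_eq_norm_sq_to_K _
    have hsumnorm : ∑ c'', ((‖T v c'' x‖ : ℂ))^2 = ((‖x‖ : ℂ))^2 := by
      calc ∑ c'', ((‖T v c'' x‖ : ℂ))^2 = ∑ c'', ⟪x, T v c'' x⟫_ℂ := by
            exact Finset.sum_congr rfl fun c'' _ => (hterm c'').symm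
      _ = ⟪x, ∑ c'', T v c'' x⟫_ℂ := by rw [inner_sum]
      _ = ⟪x, x⟫_ℂ := by rw [hTsum]
      _ = ((‖x‖ : ℂ))^2 := inner_self_eq_norm_sq_to_K _
    have hreal : ∑ c'', ‖T v c'' x‖^2 = ‖x‖^2 := by exact_mod_cast hsumnorm
    have herase : ∑ c'' ∈ Finset.univ.erase c, ‖T v c'' x‖^2 = 0 := by
      have h2 : ‖T v c x‖^2 + ∑ c'' ∈ Finset.univ.erase c, ‖T v c'' x‖^2
          = ∑ c'', ‖T v c'' x‖^2 :=
        Finset.add_sum_erase Finset.univ (fun c'' => ‖T v c'' x‖^2) (Finset.mem_univ c)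
      rw [hx, hreal] at h2
      linarith
    have h3 : ‖T v c' x‖^2 = 0 :=
      (Finset.sum_eq_zero_iff_of_nonneg (fun i _ => sq_nonneg _)).mp herase c'
        (Finset.mem_erase.mpr ⟨hne.symm, Finset.mem_univ _⟩)
    have h4 : ‖T v c' x‖ = 0 := by
      have := sq_eq_zero_iff.mp h3
      exact this
    exact norm_eq_zero.mp h4
  have hfixed : ∀ v c x, x ∈ LinearMap.range (T v c) → T v c x = x := by
    rintro v c _ ⟨w, rfl⟩; exact hTidem v c w
  have horth : ∀ v (c c' : Fin k), c ≠ c' →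
      ∀ x y : EuclideanSpace ℂ (Fin (r * k)), x ∈ LinearMap.range (T v c) →
        y ∈ LinearMap.range (T v c') → ⟪x, y⟫_ℂ = 0 := by
    intro v c c' hne x y hx hy
    obtain ⟨y', rfl⟩ := hy
    have h0 : T v c' x = 0 := hkill v c c' hne x (hfixed v c x hx)
    calc ⟪x, T v c' y'⟫_ℂ = ⟪T v c' x, y'⟫_ℂ := (hTsym v c' x y').symm
    _ = 0 := by rw [h0, inner_zero_left]
  have hfr : ∀ v c, Module.finrank ℂ (LinearMap.range (T v c)) = r := by
    intro v c
    show Module.finrank ℂ (LinearMap.range (Matrix.toEuclideanLin (E v c))) = r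
    rw [Matrix.toEuclideanLin_eq_toLin_orthonormal, ← Matrix.rank_eq_finrank_range_toLin (E v c)
      (EuclideanSpace.basisFun (Fin (r * k)) ℂ).toBasis
      (EuclideanSpace.basisFun (Fin (r * k)) ℂ).toBasis]
    exact hrank v c
  let b : ∀ v c, OrthonormalBasis (Fin r) ℂ ↥(LinearMap.range (T v c)) :=
    fun v c => (stdOrthonormalBasis ℂ ↥(LinearMap.range (T v c))).reindex (finCongr (hfr v c))
  refine ⟨fun v i c => WithLp.equiv 2 (Fin (r * k) → ℂ)
    ((b v c i : EuclideanSpace ℂ (Fin (r * k)))), ?_, ?_⟩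
  · intro v i j i' j'
    rw [cdot_eq_inner']
    by_cases hj : j = j'
    · subst hj
      have := (b v j).orthonormal
      rw [orthonormal_iff_ite] at this
      have h5 : ⟪((b v j i : EuclideanSpace ℂ (Fin (r * k)))),
          ((b v j i' : EuclideanSpace ℂ (Fin (r * k))))⟫_ℂ = if i = i' then 1 else 0 := by
        rw [← Submodule.coe_inner]
        exact this i i'
      rw [h5]
      by_cases hi : i = i' <;> simp [hi]
    · rw [horth v j j' hj _ _ (SetLike.coe_mem _) (SetLike.coe_mem _)]
      simp [hj]
  · intro u v huv i i'
    refine Finset.sum_eq_zero fun j _ => ?_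
    rw [cdot_eq_inner']
    obtain ⟨y', hy'⟩ := SetLike.coe_mem ((b v j) i')
    set x : EuclideanSpace ℂ (Fin (r * k)) := ((b u j i : EuclideanSpace ℂ (Fin (r * k))))
    have hxfix : T u j x = x := hfixed u j x (SetLike.coe_mem _)
    calc ⟪x, ((b v j i' : EuclideanSpace ℂ (Fin (r * k))))⟫_ℂ
        = ⟪T u j x, T v j y'⟫_ℂ := by rw [hxfix, hy']
    _ = ⟪x, T u j (T v j y')⟫_ℂ := hTsym u j x (T v j y')
    _ = ⟪x, Matrix.toEuclideanLin (E u j * E v j) y'⟫_ℂ := by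
          rw [toEuclideanLin_mul_apply']
    _ = 0 := by rw [hadj u v huv j]; simp

lemma exists_rank_coloring' {V : Type} [Fintype V] (G : SimpleGraph V) (r : ℕ) :
    ∃ k, 1 ≤ k ∧ ∃ E : V → Fin k → Matrix (Fin (r * k)) (Fin (r * k)) ℂ,
      IsRankRQuantumColoring G r k E := by
  classical
  obtain ⟨C⟩ : G.Colorable (Fintype.card V + 1) :=
    (G.colorable_of_fintype).mono (Nat.le_succ _)
  refine ⟨Fintype.card V + 1, Nat.succ_le_succ (Nat.zero_le _), ?_⟩
  set k := Fintype.card V + 1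
  let e : Fin r × Fin k ≃ Fin (r * k) := finProdFinEquiv
  let d : V → Fin k → Fin (r * k) → ℂ := fun v c x => if (e.symm x).2 = c + C v then 1 else 0
  refine ⟨fun v c => Matrix.diagonal (d v c), ⟨?_, ?_, ?_, ?_⟩, ?_⟩
  · intro v c
    have hstar : star (d v c) = d v c := by
      funext x
      by_cases h : (e.symm x).2 = c + C v <;> simp [d, h]
    rw [Matrix.IsHermitian, Matrix.diagonal_conjTranspose, hstar]
  · intro v c
    beta_reduce
    rw [Matrix.diagonal_mul_diagonal]
    have hdd : (fun i => d v c i * d v c i) = d v c := by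
      funext x
      by_cases h : (e.symm x).2 = c + C v <;> simp [d, h]
    rw [hdd]
  · intro v
    beta_reduce
    ext i j
    rw [Matrix.sum_apply]
    by_cases hij : i = j
    · subst hij
      simp only [Matrix.diagonal_apply_eq, Matrix.one_apply_eq]
      have key : ∀ c : Fin k, ((e.symm i).2 = c + C v) ↔ (c = (e.symm i).2 - C v) := by
        intro c
        constructor
        · intro h; rw [eq_comm] at h; exact eq_sub_of_add_eq h
        · rintro rfl; rw [sub_add_cancel]
      rw [Finset.sum_congr rfl (fun c _ => if_congr (key c) rfl rfl)]
      simp [d]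
    · simp [Matrix.diagonal_apply_ne _ hij, Matrix.one_apply_ne hij]
  · intro u v huv c
    beta_reduce
    rw [Matrix.diagonal_mul_diagonal]
    have hcol : C u ≠ C v := C.valid huv
    have hdd : (fun i => d u c i * d v c i) = (fun _ => (0 : ℂ)) := by
      funext x
      by_cases h1 : (e.symm x).2 = c + C u
      · by_cases h2 : (e.symm x).2 = c + C v
        · exact absurd (add_left_cancel (h1.symm.trans h2)) hcol
        · simp [d, h1, h2, hcol]
      · simp [d, h1]
    rw [hdd]
    ext i j
    by_cases hij : i = j
    · subst hij; simp
    · simp [Matrix.diagonal_apply_ne _ hij]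
  · intro v c
    beta_reduce
    rw [Matrix.rank_diagonal]
    have hiff : ∀ x, d v c x ≠ 0 ↔ (e.symm x).2 = c + C v := by
      intro x
      by_cases h : (e.symm x).2 = c + C v <;> simp [d, h]
    let eq2 : {p : Fin r × Fin k // p.2 = c + C v} ≃ Fin r :=
      { toFun := fun p => p.1.1
        invFun := fun i => ⟨(i, c + C v), rfl⟩
        left_inv := by rintro ⟨⟨i, j⟩, h⟩; cases h; rfl
        right_inv := fun i => rfl }
    rw [Fintype.card_congr ((Equiv.subtypeEquivRight hiff).trans
      (((e.symm).subtypeEquiv (fun x => Iff.rfl)).trans eq2)), Fintype.card_fin]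

end AuxClump

/-- a rank-`r` quantum `k`-colouring yields an `(r,k)`-clump
representation; in particular `ξ_c^{(r)}(G) ≤ χ_q^{(r)}(G)`. -/
theorem clumpRank_le_rankChromaticNumber {V : Type} [Fintype V]
    (G : SimpleGraph V) (r k : ℕ) (hr : 1 ≤ r) (hk : 1 ≤ k) :
    ((∃ E : V → Fin k → Matrix (Fin (r * k)) (Fin (r * k)) ℂ,
        IsRankRQuantumColoring G r k E) →
      ∃ ψ : V → Fin r → Fin k → Fin (r * k) → ℂ, IsClumpRep G r k ψ) ∧
    clumpRank G r ≤ rankChromaticNumber G r := by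
  constructor
  · rintro ⟨E, hE⟩
    exact quantum_to_clump' G r k E hE
  · obtain ⟨k₁, hk₁⟩ := exists_rank_coloring' G r
    have hne : {k' | 1 ≤ k' ∧ ∃ E : V → Fin k' → Matrix (Fin (r * k')) (Fin (r * k')) ℂ,
        IsRankRQuantumColoring G r k' E}.Nonempty := ⟨k₁, hk₁⟩
    have hmem := Nat.sInf_mem hne
    obtain ⟨h1, E, hE⟩ := hmem
    obtain ⟨ψ, hψ⟩ := quantum_to_clump' G r _ E hE
    exact Nat.sInf_le ⟨h1, ψ, hψ⟩
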